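/- Let Φ be a metric space equipped with its Borel σ-algebra and let σ be a probability measure on Φ. Let R : Φ → ℝ be Lipschitz continuous with constant K > 0, and let φ* ∈ Φ satisfy R(φ*) ≤ R(φ) for all φ ∈ Φ. Let ε > 0 and L_σ > 0 satisfy σ(B̄(φ*, ε/K)) ≥ L_σ · (ε/K) and L_σ · ε / K < 1. Let δ ∈ (0, 1) and let m be a natural number with m ≥ log(δ) / log(1 − L_σ · ε / K). Then the m-fold product measure σ^m assigns outer measure at most δ to the bad event {(φ₁, …, φ_m) ∈ Φ^m : R(φ_i) > R(φ*) + ε for every i}; equivalently, with probability at least 1 − δ over m i.i.d. draws φ₁, …, φ_m from σ, the approximation error of the best sampled adversary on the inner optimization problem satisfies min_{1 ≤ i ≤ m} R(φ_i) − R(φ*) ≤ ε. -/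
import Mathlib


open MeasureTheory

/-- Theorem 2 of the paper: if R is K-Lipschitz with global minimizer φ*, σ satisfies the
density condition σ(B̄(φ*, ε/K)) ≥ L_σ·(ε/K), and m ≥ log(δ)/log(1 - L_σ·ε/K), then the
bad event that every one of m i.i.d. sampled adversaries has reward more than ε above the
optimum has (outer) measure at most δ under the product measure σ^m. -/
theorem herd_approx_error_le_eps_whp {Φ : Type*} [MetricSpace Φ] [MeasurableSpace Φ]
    [BorelSpace Φ] (σ : Measure Φ) [IsProbabilityMeasure σ]
    (R : Φ → ℝ) (K : ℝ) (hK : 0 < K) (hLip : LipschitzWith ⟨K, hK.le⟩ R)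
    (φstar : Φ) (hstar : ∀ φ : Φ, R φstar ≤ R φ)
    (ε : ℝ) (hε : 0 < ε) (Lσ : ℝ) (hLσ : 0 < Lσ)
    (hball : ENNReal.ofReal (Lσ * (ε / K)) ≤ σ (Metric.closedBall φstar (ε / K)))
    (hlt : Lσ * ε / K < 1)
    (δ : ℝ) (hδ : 0 < δ) (hδ1 : δ < 1)
    (m : ℕ) (hm : Real.log δ / Real.log (1 - Lσ * ε / K) ≤ (m : ℝ)) :
    (Measure.pi fun _ : Fin m => σ) {t : Fin m → Φ | ∀ i, R φstar + ε < R (t i)} ≤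
      ENNReal.ofReal δ := by
  set q : ℝ := Lσ * ε / K with hq
  have hq0 : 0 < q := by positivity
  have hq1 : 1 - q < 1 := by linarith
  have hq1' : 0 < 1 - q := by linarith
  -- step 1: bad set is contained in product of ball complements
  have hsub : {t : Fin m → Φ | ∀ i, R φstar + ε < R (t i)} ⊆
      Set.pi Set.univ (fun _ : Fin m => (Metric.closedBall φstar (ε / K))ᶜ) := by
    intro t ht i _
    intro hmem
    have hd : dist (t i) φstar ≤ ε / K := hmem
    have := hLip.dist_le_mul (t i) φstar
    have hRd : |R (t i) - R φstar| ≤ ε := by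
      rw [Real.dist_eq] at this
      calc |R (t i) - R φstar| ≤ K * dist (t i) φstar := this
        _ ≤ K * (ε / K) := by nlinarith
        _ = ε := by field_simp
    have := abs_le.mp hRd
    have := ht i
    linarith
  -- step 2: measure of complement of ball ≤ 1 - q
  have hcompl : σ ((Metric.closedBall φstar (ε / K))ᶜ) ≤ ENNReal.ofReal (1 - q) := by
    have hmeas : MeasurableSet (Metric.closedBall φstar (ε / K)) :=
      measurableSet_closedBall
    rw [measure_compl hmeas (measure_ne_top σ _), measure_univ]
    have h1 : ENNReal.ofReal q ≤ σ (Metric.closedBall φstar (ε / K)) := by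
      rw [hq, mul_div_assoc]; exact hball
    calc 1 - σ (Metric.closedBall φstar (ε / K)) ≤ 1 - ENNReal.ofReal q :=
          tsub_le_tsub_left h1 1
      _ = ENNReal.ofReal (1 - q) := by
          rw [← ENNReal.ofReal_one, ← ENNReal.ofReal_sub _ hq0.le]
  -- step 3: combine
  calc (Measure.pi fun _ : Fin m => σ) {t : Fin m → Φ | ∀ i, R φstar + ε < R (t i)}
      ≤ (Measure.pi fun _ : Fin m => σ)
          (Set.pi Set.univ (fun _ : Fin m => (Metric.closedBall φstar (ε / K))ᶜ)) :=
        measure_mono hsub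
    _ = ∏ _i : Fin m, σ ((Metric.closedBall φstar (ε / K))ᶜ) := Measure.pi_pi _ _
    _ ≤ ∏ _i : Fin m, ENNReal.ofReal (1 - q) :=
        Finset.prod_le_prod' (fun _ _ => hcompl)
    _ = ENNReal.ofReal ((1 - q) ^ m) := by
        rw [Finset.prod_const, Finset.card_univ, Fintype.card_fin,
          ENNReal.ofReal_pow hq1'.le]
    _ ≤ ENNReal.ofReal δ := by
        apply ENNReal.ofReal_le_ofReal
        have hlog : Real.log (1 - q) < 0 := Real.log_neg hq1' hq1
        have hmul : (m : ℝ) * Real.log (1 - q) ≤ Real.log δ := by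
          have := (div_le_iff_of_neg hlog).mp hm
          linarith
        have : Real.log ((1 - q) ^ m) ≤ Real.log δ := by
          rw [Real.log_pow]; exact hmul
        calc (1 - q) ^ m = Real.exp (Real.log ((1 - q) ^ m)) := by
              rw [Real.exp_log (by positivity)]
          _ ≤ Real.exp (Real.log δ) := Real.exp_le_exp.mpr this
          _ = δ := Real.exp_log hδ
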